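/- Let $k$ be a field of characteristic $p > 0$ and $B = k\langle x, d\rangle/(dx - xd - 1, d^p)$. The kernel of the multiplication map $m : B \otimes_{k[x]} B \to B$, $a \otimes b \mapsto ab$, equals the left ideal of $B \otimes_{k[x]} B$ generated by $d \otimes 1 - 1 \otimes d$. -/

import Mathlib

/-- The defining relations `d * x = x * d + 1` and `d^p = 0` of the reduced Weyl
algebra `B = k⟨x,d⟩/(dx - xd - 1, d^p)` (generator `false` is `x`, `true` is `d`). -/
inductive RWRel (k : Type) [Field k] (p : ℕ) :
    FreeAlgebra k Bool → FreeAlgebra k Bool → Prop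
  | weyl : RWRel k p (FreeAlgebra.ι k true * FreeAlgebra.ι k false)
      (FreeAlgebra.ι k false * FreeAlgebra.ι k true + 1)
  | dp : RWRel k p (FreeAlgebra.ι k true ^ p) 0

/-- The generator `x` of the reduced Weyl algebra. -/
noncomputable def Bx (k : Type) [Field k] (p : ℕ) : RingQuot (RWRel k p) :=
  RingQuot.mkAlgHom k (RWRel k p) (FreeAlgebra.ι k false)

/-- The generator `d` of the reduced Weyl algebra. -/
noncomputable def Bd (k : Type) [Field k] (p : ℕ) : RingQuot (RWRel k p) :=
  RingQuot.mkAlgHom k (RWRel k p) (FreeAlgebra.ι k true)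

set_option maxHeartbeats 1000000
set_option maxSynthPendingDepth 3
set_option synthInstance.maxHeartbeats 400000

open scoped TensorProduct

/-- The canonical map `k[x] → B` sending `X` to `x`. -/
noncomputable def phi (k : Type) [Field k] (p : ℕ) :
    Polynomial k →+* RingQuot (RWRel k p) :=
  (Polynomial.aeval (Bx k p)).toRingHom

/-- `B` as a `k[x]`-module via left multiplication through `phi`
(this is the module structure on the second tensor factor). -/
noncomputable instance (k : Type) [Field k] (p : ℕ) :
    Module (Polynomial k) (RingQuot (RWRel k p)) :=
  Module.compHom _ (phi k p)

/-- A copy of `B` regarded as a `k[x]`-module via right multiplication through `phi`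
(this is the module structure on the first tensor factor). -/
def Br (k : Type) [Field k] (p : ℕ) : Type := RingQuot (RWRel k p)

noncomputable instance (k : Type) [Field k] (p : ℕ) : AddCommGroup (Br k p) :=
  inferInstanceAs (AddCommGroup (RingQuot (RWRel k p)))

noncomputable instance (k : Type) [Field k] (p : ℕ) : Module (Polynomial k) (Br k p) :=
  Module.compHom (RingQuot (RWRel k p))
    ((phi k p).toOpposite fun x y => by
      simp only [Commute, SemiconjBy, ← map_mul, mul_comm])

/-- The identity of `B`, viewed as landing in the right-module copy `Br`. -/
def toBr (k : Type) [Field k] (p : ℕ) (a : RingQuot (RWRel k p)) : Br k p := a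

/-- The multiplication map `m : B ⊗_{k[x]} B → B`, `a ⊗ b ↦ a * b`. -/
noncomputable def mmul (k : Type) [Field k] (p : ℕ) :
    Br k p ⊗[Polynomial k] RingQuot (RWRel k p) →+ RingQuot (RWRel k p) :=
  TensorProduct.liftAddHom
    { toFun := fun a => AddMonoidHom.mulLeft (show RingQuot (RWRel k p) from a)
      map_zero' := by
        ext b
        show (0 : RingQuot (RWRel k p)) * b = 0
        rw [zero_mul]
      map_add' := fun a a' => by
        ext b
        exact add_mul (show RingQuot (RWRel k p) from a)
          (show RingQuot (RWRel k p) from a') b }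
    (fun f a b => by
      show ((show RingQuot (RWRel k p) from a) * phi k p f) * b
          = (show RingQuot (RWRel k p) from a) * (phi k p f * b)
      rw [mul_assoc])

/-- The kernel of the multiplication map `B ⊗_{k[x]} B → B` equals the left ideal of
`B^e` generated by `δ = d ⊗ 1 - 1 ⊗ d`, i.e. the additive subgroup generated by the
elements `a·δ·b = (a*d) ⊗ b - a ⊗ (d*b)`. -/
lemma smul_Br (k : Type) [Field k] (p : ℕ) (r : Polynomial k) (a : RingQuot (RWRel k p)) :
    r • (toBr k p a) = toBr k p (a * phi k p r) := rfl

lemma smul_B (k : Type) [Field k] (p : ℕ) (r : Polynomial k) (b : RingQuot (RWRel k p)) :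
    r • b = phi k p r * b := rfl

lemma mmul_tmul (k : Type) [Field k] (p : ℕ) (a b : RingQuot (RWRel k p)) :
    mmul k p (toBr k p a ⊗ₜ[Polynomial k] b) = a * b :=
  TensorProduct.liftAddHom_tmul _ _ _ _
lemma toBr_add (k : Type) [Field k] (p : ℕ) (x y : RingQuot (RWRel k p)) :
    toBr k p (x + y) = toBr k p x + toBr k p y := rfl

lemma key (k : Type) [Field k] (p : ℕ)
    (S : AddSubgroup (Br k p ⊗[Polynomial k] RingQuot (RWRel k p)))
    (hS : ∀ a b : RingQuot (RWRel k p),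
      (toBr k p (a * Bd k p)) ⊗ₜ[Polynomial k] b
        - (toBr k p a) ⊗ₜ[Polynomial k] (Bd k p * b) ∈ S) :
    ∀ (y : FreeAlgebra k Bool) (a c : RingQuot (RWRel k p)),
      toBr k p a ⊗ₜ[Polynomial k] (RingQuot.mkAlgHom k (RWRel k p) y * c)
        - toBr k p (a * RingQuot.mkAlgHom k (RWRel k p) y) ⊗ₜ[Polynomial k] c ∈ S := by
  intro y
  induction y using FreeAlgebra.induction with
  | grade0 r =>
    intro a c
    have h1 : RingQuot.mkAlgHom k (RWRel k p) (algebraMap k (FreeAlgebra k Bool) r)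
        = phi k p (Polynomial.C r) := by
      simp [phi, Polynomial.aeval_C]
    rw [h1]
    have : toBr k p a ⊗ₜ[Polynomial k] (phi k p (Polynomial.C r) * c)
        = toBr k p (a * phi k p (Polynomial.C r)) ⊗ₜ[Polynomial k] c := by
      rw [← smul_B, ← smul_Br, TensorProduct.smul_tmul]
    rw [this, sub_self]
    exact S.zero_mem
  | grade1 i =>
    cases i with
    | false =>
      intro a c
      have h1 : RingQuot.mkAlgHom k (RWRel k p) (FreeAlgebra.ι k false)
          = phi k p Polynomial.X := by
        simp [phi, Bx]
      rw [h1]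
      have : toBr k p a ⊗ₜ[Polynomial k] (phi k p Polynomial.X * c)
          = toBr k p (a * phi k p Polynomial.X) ⊗ₜ[Polynomial k] c := by
        rw [← smul_B, ← smul_Br, TensorProduct.smul_tmul]
      rw [this, sub_self]
      exact S.zero_mem
    | true =>
      intro a c
      have := S.neg_mem (hS a c)
      rw [neg_sub] at this
      exact this
  | mul y₁ y₂ ih₁ ih₂ =>
    intro a c
    rw [map_mul]
    have h1 := ih₁ a (RingQuot.mkAlgHom k (RWRel k p) y₂ * c)
    have h2 := ih₂ (a * RingQuot.mkAlgHom k (RWRel k p) y₁) c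
    have h3 := S.add_mem h1 h2
    rw [mul_assoc (RingQuot.mkAlgHom k (RWRel k p) y₁) (RingQuot.mkAlgHom k (RWRel k p) y₂) c,
      ← mul_assoc a]
    convert h3 using 1
    abel
  | add y₁ y₂ ih₁ ih₂ =>
    intro a c
    rw [map_add, add_mul, mul_add, TensorProduct.tmul_add, toBr_add,
      TensorProduct.add_tmul]
    have := S.add_mem (ih₁ a c) (ih₂ a c)
    convert this using 1
    abel
theorem statement18 (k : Type) [Field k] (p : ℕ) (hp : p.Prime) [CharP k p] :
    {w : Br k p ⊗[Polynomial k] RingQuot (RWRel k p) | mmul k p w = 0}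
      = (AddSubgroup.closure {z : Br k p ⊗[Polynomial k] RingQuot (RWRel k p) |
          ∃ a b : RingQuot (RWRel k p),
            z = (toBr k p (a * Bd k p)) ⊗ₜ[Polynomial k] b
                - (toBr k p a) ⊗ₜ[Polynomial k] (Bd k p * b)} :
          AddSubgroup (Br k p ⊗[Polynomial k] RingQuot (RWRel k p))) := by
  set S : AddSubgroup (Br k p ⊗[Polynomial k] RingQuot (RWRel k p)) :=
    AddSubgroup.closure {z : Br k p ⊗[Polynomial k] RingQuot (RWRel k p) |
      ∃ a b : RingQuot (RWRel k p),
        z = (toBr k p (a * Bd k p)) ⊗ₜ[Polynomial k] b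
            - (toBr k p a) ⊗ₜ[Polynomial k] (Bd k p * b)} with hSdef
  have hS : ∀ a b : RingQuot (RWRel k p),
      (toBr k p (a * Bd k p)) ⊗ₜ[Polynomial k] b
        - (toBr k p a) ⊗ₜ[Polynomial k] (Bd k p * b) ∈ S := fun a b =>
    AddSubgroup.subset_closure ⟨a, b, rfl⟩
  have main : ∀ w : Br k p ⊗[Polynomial k] RingQuot (RWRel k p),
      w - toBr k p (mmul k p w) ⊗ₜ[Polynomial k] (1 : RingQuot (RWRel k p)) ∈ S := by
    intro w
    induction w using TensorProduct.induction_on with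
    | zero =>
      rw [map_zero]
      show (0 : Br k p ⊗[Polynomial k] RingQuot (RWRel k p))
        - toBr k p 0 ⊗ₜ[Polynomial k] 1 ∈ S
      have : toBr k p 0 = (0 : Br k p) := rfl
      rw [this, TensorProduct.zero_tmul, sub_zero]
      exact S.zero_mem
    | tmul a b =>
      obtain ⟨y, hy⟩ := RingQuot.mkAlgHom_surjective k (RWRel k p) b
      show toBr k p a ⊗ₜ[Polynomial k] b
        - toBr k p ((mmul k p) (toBr k p a ⊗ₜ[Polynomial k] b)) ⊗ₜ[Polynomial k] 1 ∈ S
      rw [mmul_tmul k p a b, ← hy]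
      have h := key k p S hS y a 1
      rwa [mul_one] at h
    | add x y hx hy =>
      rw [map_add, toBr_add, TensorProduct.add_tmul]
      have := S.add_mem hx hy
      convert this using 1
      abel
  ext w
  simp only [Set.mem_setOf_eq, SetLike.mem_coe]
  constructor
  · intro hw
    have h := main w
    rw [hw] at h
    have h0 : toBr k p 0 ⊗ₜ[Polynomial k] (1 : RingQuot (RWRel k p)) = 0 := by
      have : toBr k p 0 = (0 : Br k p) := rfl
      rw [this, TensorProduct.zero_tmul]
    rw [h0, sub_zero] at h
    exact h
  · intro hw
    refine AddSubgroup.closure_induction ?_ ?_ ?_ ?_ hw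
    · rintro z ⟨a, b, rfl⟩
      rw [map_sub, mmul_tmul, mmul_tmul, mul_assoc, sub_self]
    · exact map_zero _
    · intro x y _ _ hx hy
      rw [map_add, hx, hy, add_zero]
    · intro x _ hx
      rw [map_neg, hx, neg_zero]
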